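/- arXiv:2007.14048 — 4 statements merged into one kernel-verified Lean document; each statement's English description precedes it below -/
import Mathlib

section
/- For all real x and all integers n ≥ 1, 3x·(B_{2n+1}(x) − B_{2n−1}(x)) = C_{2n+1}(x) + C_{2n−1}(x). -/
def B (x : ℝ) : ℕ → ℝ
  | 0 => 0
  | 1 => 1
  | n + 2 => 6 * x * B x (n + 1) - B x n

def C (x : ℝ) : ℕ → ℝ
  | 0 => 1
  | 1 => 3 * x
  | n + 2 => 6 * x * C x (n + 1) - C x n

lemma aux (x : ℝ) : ∀ k : ℕ, 3 * x * (B x (k + 2) - B x k) = C x (k + 2) + C x k := by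
  intro k
  induction k using Nat.twoStepInduction with
  | zero => simp [B, C]; ring
  | one => simp [B, C]; ring
  | more k ih1 ih0 =>
    have hB : B x (k + 2 + 2) = 6 * x * B x (k + 3) - B x (k + 2) := rfl
    have hB' : B x (k + 3) = 6 * x * B x (k + 2) - B x (k + 1) := rfl
    have hC : C x (k + 2 + 2) = 6 * x * C x (k + 3) - C x (k + 2) := rfl
    have hC' : C x (k + 3) = 6 * x * C x (k + 2) - C x (k + 1) := rfl
    have h1 : (k + 1) + 2 = k + 3 := rfl
    rw [hB, hC]
    rw [h1] at ih0
    have hB2 : B x (k + 2) = 6 * x * B x (k + 1) - B x k := rfl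
    have hC2 : C x (k + 2) = 6 * x * C x (k + 1) - C x k := rfl
    linear_combination 6 * x * ih0 - ih1 - 3 * x * hB2 - hC2

theorem stmt1 (x : ℝ) (n : ℕ) (hn : 1 ≤ n) :
    3 * x * (B x (2 * n + 1) - B x (2 * n - 1)) = C x (2 * n + 1) + C x (2 * n - 1) := by
  obtain ⟨m, rfl⟩ := Nat.exists_eq_add_of_le hn
  have h : 2 * (1 + m) + 1 = (2 * m + 1) + 2 := by ring
  have h2 : 2 * (1 + m) - 1 = 2 * m + 1 := by omega
  rw [h, h2]
  exact aux x (2 * m + 1)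
end

section
/- For all real x and all integers n ≥ 1, B_{2n+1}(x) − (18x² − 1)·B_{2n−1}(x) = C_{2n}(x) + C_{2(n−1)}(x). -/
lemma aux3 (x : ℝ) : ∀ m : ℕ,
    B x (m + 3) - (18 * x ^ 2 - 1) * B x (m + 1) = C x (m + 2) + C x m := by
  intro m
  induction m using Nat.twoStepInduction with
  | zero => simp [B, C]; ring
  | one => simp [B, C]; ring
  | more m ih1 ih2 =>
    have hB : B x (m + 2 + 3) = 6 * x * B x (m + 4) - B x (m + 3) := rfl
    have hC : C x (m + 2 + 2) = 6 * x * C x (m + 3) - C x (m + 2) := rfl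
    have hC2 : C x (m + 2) = 6 * x * C x (m + 1) - C x m := rfl
    have hB2 : B x (m + 2 + 1) = 6 * x * B x (m + 2) - B x (m + 1) := rfl
    simp only [show m+1+3=m+4 from by ring, show m+1+2=m+3 from by ring,
      show m+1+1=m+2 from by ring] at ih2
    have hB3 : B x (m + 3) = 6 * x * B x (m + 2) - B x (m + 1) := rfl
    rw [hB, hC, hB2]
    linear_combination 6 * x * ih2 - ih1 + hB3 - hC2

theorem stmt3 (x : ℝ) (n : ℕ) (hn : 1 ≤ n) :
    B x (2 * n + 1) - (18 * x ^ 2 - 1) * B x (2 * n - 1) = C x (2 * n) + C x (2 * (n - 1)) := by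
  obtain ⟨k, rfl⟩ := Nat.exists_eq_add_of_le hn
  have h1 : 2 * (1 + k) + 1 = 2 * k + 3 := by ring
  have h2 : 2 * (1 + k) - 1 = 2 * k + 1 := by omega
  have h3 : 2 * (1 + k) = 2 * k + 2 := by ring
  have h4 : 2 * (1 + k - 1) = 2 * k := by omega
  rw [h1, h2, h3, h4]
  exact aux3 x (2 * k)
end

section
/- For all real x and all integers n ≥ 1, 3x·(B_n(x) − B_{n−1}(x)) = C_{2n−1}(x) − (36x² − 6x − 2)·∑_{k=1}^{n−1} B_k(x)·C_{2(n−k)−1}(x). -/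
lemma C_rec (x : ℝ) (j : ℕ) : C x (j + 2) = 6 * x * C x (j + 1) - C x j := rfl

lemma B_rec (x : ℝ) (j : ℕ) : B x (j + 2) = 6 * x * B x (j + 1) - B x j := rfl

lemma key (x : ℝ) (n : ℕ) :
    (36 * x ^ 2 - 6 * x - 2) * ∑ k ∈ Finset.Icc 1 n, B x k * C x (2 * (n + 1 - k) - 1)
      = C x (2 * n + 1) - 3 * x * B x (n + 1) + 3 * x * B x n
  ∧ (36 * x ^ 2 - 6 * x - 2) * ∑ k ∈ Finset.Icc 1 n, B x k * C x (2 * (n + 1 - k))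
      = C x (2 * n + 2) + (1 - 18 * x ^ 2) * B x (n + 1) + B x n := by
  induction n with
  | zero =>
    refine ⟨?_, ?_⟩ <;> (simp [B, C]; try ring_nf)
  | succ n ih =>
    obtain ⟨ih1, ih2⟩ := ih
    have h1 : ∀ k ∈ Finset.Icc 1 n,
        B x k * C x (2 * (n + 1 + 1 - k) - 1)
          = 6 * x * (B x k * C x (2 * (n + 1 - k)))
            - B x k * C x (2 * (n + 1 - k) - 1) := by
      intro k hk
      simp only [Finset.mem_Icc] at hk
      obtain ⟨t, ht⟩ : ∃ t, n + 1 - k = t + 1 := ⟨n - k, by omega⟩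
      have e1 : 2 * (n + 1 + 1 - k) - 1 = 2 * t + 3 := by omega
      have e2 : 2 * (n + 1 - k) = 2 * t + 2 := by omega
      have e3 : 2 * (n + 1 - k) - 1 = 2 * t + 1 := by omega
      rw [e1, e3, e2, show (2 * t + 3) = (2 * t + 1) + 2 from rfl, C_rec]
      ring
    have h2 : ∀ k ∈ Finset.Icc 1 n,
        B x k * C x (2 * (n + 1 + 1 - k))
          = (36 * x ^ 2 - 1) * (B x k * C x (2 * (n + 1 - k)))
            - 6 * x * (B x k * C x (2 * (n + 1 - k) - 1)) := by
      intro k hk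
      simp only [Finset.mem_Icc] at hk
      obtain ⟨t, ht⟩ : ∃ t, n + 1 - k = t + 1 := ⟨n - k, by omega⟩
      have e1 : 2 * (n + 1 + 1 - k) = 2 * t + 4 := by omega
      have e2 : 2 * (n + 1 - k) = 2 * t + 2 := by omega
      have e3 : 2 * (n + 1 - k) - 1 = 2 * t + 1 := by omega
      rw [e1, e3, e2, show (2 * t + 4) = (2 * t + 2) + 2 from rfl, C_rec,
        show (2 * t + 2) = (2 * t + 1) + 1 from rfl,
        show (2 * t + 1 + 1) = (2 * t) + 2 from rfl, C_rec,
        show (2 * t + 1) = (2 * t) + 1 from rfl]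
      ring
    have top : (1 : ℕ) ≤ n + 1 := by omega
    constructor
    · rw [Finset.sum_Icc_succ_top top, Finset.sum_congr rfl h1]
      have e4 : 2 * (n + 1 + 1 - (n + 1)) - 1 = 1 := by omega
      rw [e4, Finset.sum_sub_distrib, ← Finset.mul_sum]
      have hC1 : C x 1 = 3 * x := rfl
      rw [hC1, show 2 * (n + 1) + 1 = (2 * n + 1) + 2 from by ring, C_rec,
        show 2 * n + 1 + 1 = 2 * n + 2 from rfl,
        show n + 1 + 1 = n + 2 from rfl, B_rec]
      linear_combination 6 * x * ih2 - ih1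
    · rw [Finset.sum_Icc_succ_top top, Finset.sum_congr rfl h2]
      have e4 : 2 * (n + 1 + 1 - (n + 1)) = 2 := by omega
      rw [e4, Finset.sum_sub_distrib, ← Finset.mul_sum, ← Finset.mul_sum]
      have hC2 : C x 2 = 6 * x * (3 * x) - 1 := rfl
      rw [hC2, show 2 * (n + 1) + 2 = (2 * n + 2) + 2 from by ring, C_rec,
        show 2 * n + 2 + 1 = (2 * n + 1) + 2 from by ring, C_rec,
        show 2 * n + 1 + 1 = 2 * n + 2 from rfl,
        show n + 1 + 1 = n + 2 from rfl, B_rec]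
      linear_combination (36 * x ^ 2 - 1) * ih2 - 6 * x * ih1

theorem stmt5 (x : ℝ) (n : ℕ) (hn : 1 ≤ n) :
    3 * x * (B x n - B x (n - 1)) =
      C x (2 * n - 1) - (36 * x ^ 2 - 6 * x - 2) *
        ∑ k ∈ Finset.Icc 1 (n - 1), B x k * C x (2 * (n - k) - 1) := by
  obtain ⟨m, rfl⟩ : ∃ m, n = m + 1 := ⟨n - 1, by omega⟩
  have e1 : m + 1 - 1 = m := rfl
  have e2 : 2 * (m + 1) - 1 = 2 * m + 1 := by omega
  rw [e1, e2]
  have := (key x m).1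
  linarith [this]
end

section
/- For all integers n ≥ 0, B_n(1/2) = F_{2n}, where F denotes the Fibonacci numbers. -/
theorem stmt11 (n : ℕ) : B (1 / 2) n = Nat.fib (2 * n) := by
  induction n using Nat.strong_induction_on with
  | _ n ih =>
    match n with
    | 0 => simp [B]
    | 1 => simp [B]
    | (m + 2) =>
      rw [B, ih (m+1) (by omega), ih m (by omega)]
      have h : Nat.fib (2 * (m + 2)) + Nat.fib (2 * m) = 3 * Nat.fib (2 * (m + 1)) := by
        have h1 : Nat.fib (2*m+2) = Nat.fib (2*m) + Nat.fib (2*m+1) := Nat.fib_add_two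
        have h2 : Nat.fib (2*m+3) = Nat.fib (2*m+1) + Nat.fib (2*m+2) := Nat.fib_add_two
        have h3 : Nat.fib (2*m+4) = Nat.fib (2*m+2) + Nat.fib (2*m+3) := Nat.fib_add_two
        simp only [show 2*(m+2) = 2*m+4 by ring, show 2*(m+1) = 2*m+2 by ring]
        omega
      have h' : (Nat.fib (2 * (m + 2)) : ℝ) + Nat.fib (2 * m) = 3 * Nat.fib (2 * (m + 1)) := by
        exact_mod_cast congrArg (Nat.cast : ℕ → ℝ) h
      push_cast at h' ⊢
      linarith
end
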